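/- arXiv:0802.2347 — 3 statements merged into one kernel-verified Lean document; each statement's English description precedes it below -/
import Mathlib

section
/- The Borel transform of the semicircle measure satisfies F(z) = ∫_{-1}^{1} (x - z)^{-1} dμ_c(x) = -2z(1 - √(1 - 1/z²)) for all complex z with |z| > 1, where the square root is the principal branch. -/
open Finset Real MeasureTheory intervalIntegral




noncomputable def aa (k : ℕ) : ℝ := (catalan k : ℝ) / 4 ^ k

lemma cat_ratio (n : ℕ) : 2*(n+2)*catalan (n+1) = 4*(2*n+1)*catalan n := by
  have h1 : (n+1+1) * catalan (n+1) = Nat.centralBinom (n+1) :=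
    succ_mul_catalan_eq_centralBinom (n+1)
  have h2 := Nat.succ_mul_centralBinom_succ n
  have h3 := succ_mul_catalan_eq_centralBinom n
  have key : (n+1) * (2*(n+2)*catalan (n+1)) = (n+1) * (4*(2*n+1)*catalan n) := by
    calc (n+1) * (2*(n+2)*catalan (n+1)) = 2 * ((n+1) * Nat.centralBinom (n+1)) := by
          rw [← h1]; ring
    _ = 2 * (2 * (2*n+1) * Nat.centralBinom n) := by rw [h2]
    _ = 2 * (2 * (2*n+1) * ((n+1) * catalan n)) := by rw [← h3]
    _ = (n+1) * (4*(2*n+1)*catalan n) := by ring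
  exact Nat.eq_of_mul_eq_mul_left (Nat.succ_pos n) key

lemma aa_nonneg (k : ℕ) : 0 ≤ aa k := by
  unfold aa; positivity

lemma aa_zero : aa 0 = 1 := by simp [aa]

lemma four_pow_pos (n : ℕ) : (0:ℝ) < 4 ^ n := by positivity

lemma aa_ratio (n : ℕ) : (2*(n:ℝ)+4) * aa (n+1) = (2*n+1) * aa n := by
  have h' : (2*((n:ℝ)+2)*(catalan (n+1) : ℝ)) = 4*(2*n+1)*(catalan n : ℝ) := by
    exact_mod_cast congrArg (fun m : ℕ => (m:ℝ)) (cat_ratio n)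
  unfold aa
  have h4 : (4:ℝ)^(n+1) = 4 * 4^n := by ring
  rw [h4]
  field_simp
  nlinarith [h', four_pow_pos n]

lemma aa_partial (n : ℕ) : ∑ k ∈ range (n+1), aa k = 2 - (2*n+1) * aa n := by
  induction n with
  | zero => simp [aa_zero]; norm_num
  | succ m ih =>
    rw [Finset.sum_range_succ, ih]
    have h := aa_ratio m
    push_cast
    nlinarith [h]

lemma aa_sum_le (n : ℕ) : ∑ k ∈ range n, aa k ≤ 2 := by
  cases n with
  | zero => simp
  | succ m =>
    rw [aa_partial]
    nlinarith [aa_nonneg m]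

lemma aa_le_two (k : ℕ) : aa k ≤ 2 := by
  have h3 : ∑ k' ∈ range (k+1), aa k' = ∑ k' ∈ range k, aa k' + aa k := Finset.sum_range_succ _ _
  have h2 := aa_sum_le (k+1)
  rw [h3] at h2
  nlinarith [Finset.sum_nonneg (fun i (_ : i ∈ range k) => aa_nonneg i)]

lemma aa_conv (n : ℕ) : ∑ k ∈ range (n+1), aa k * aa (n-k) = 4 * aa (n+1) := by
  have hc : (catalan (n+1) : ℝ) = ∑ k ∈ range (n+1), (catalan k : ℝ) * (catalan (n-k) : ℝ) := by
    rw [catalan_succ']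
    push_cast [Finset.Nat.sum_antidiagonal_eq_sum_range_succ_mk]
    rfl
  have hterm : ∀ k ∈ range (n+1), aa k * aa (n-k) = (catalan k : ℝ) * (catalan (n-k) : ℝ) / 4^n := by
    intro k hk
    have hk' : k ≤ n := Nat.lt_succ_iff.mp (Finset.mem_range.mp hk)
    unfold aa
    rw [div_mul_div_comm, ← pow_add]
    congr 2
    omega
  rw [Finset.sum_congr rfl hterm, ← Finset.sum_div, ← hc]
  unfold aa
  rw [pow_succ]
  field_simp





lemma prodP (k : ℕ) : ∏ i ∈ range k, ((2*(i:ℝ)+1)/(2*i+2)) = Nat.centralBinom k / 4^k := by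
  induction k with
  | zero => simp [Nat.centralBinom]
  | succ m ih =>
    rw [Finset.prod_range_succ, ih]
    have h2 := Nat.succ_mul_centralBinom_succ m
    have h2' : ((m:ℝ)+1) * (Nat.centralBinom (m+1) : ℝ) = 2*(2*m+1) * (Nat.centralBinom m : ℝ) := by
      exact_mod_cast congrArg (fun j : ℕ => (j:ℝ)) h2
    have h4 : (4:ℝ)^(m+1) = 4 * 4^m := by ring
    have hp : (0:ℝ) < 4^m := by positivity
    rw [h4]
    field_simp
    nlinarith [h2', hp]

lemma I_even (k : ℕ) : ∫ x in (-(π/2))..(π/2), sin x ^ (2*k)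
    = π * ∏ i ∈ range k, ((2*(i:ℝ)+1)/(2*i+2)) := by
  induction k with
  | zero => simp
  | succ m ih =>
    have h : 2*(m+1) = 2*m + 2 := by ring
    rw [h, integral_sin_pow, ih, Finset.prod_range_succ]
    simp [Real.cos_pi_div_two]
    ring

lemma moment (k : ℕ) : (∫ x in (-1:ℝ)..1, x^(2*k) * Real.sqrt (1 - x^2)) = π/2 * aa k := by
  have hg : Continuous fun x : ℝ => x^(2*k) * Real.sqrt (1-x^2) := by
    exact (continuous_pow _).mul (Real.continuous_sqrt.comp (by continuity))
  have hsub : (∫ x in (-1:ℝ)..1, x^(2*k) * Real.sqrt (1 - x^2))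
      = ∫ x in (-(π/2))..(π/2), (sin x^(2*k) * Real.sqrt (1 - sin x^2)) * cos x := by
    have := integral_comp_mul_deriv (f := sin) (f' := cos) (a := -(π/2)) (b := π/2)
      (g := fun x : ℝ => x^(2*k) * Real.sqrt (1-x^2))
      (fun x _ => hasDerivAt_sin x) continuous_cos.continuousOn hg
    simp only [Real.sin_neg, Real.sin_pi_div_two] at this
    rw [← this]
    apply intervalIntegral.integral_congr
    intro x hx
    simp [Function.comp]
  have hcongr : Set.EqOn (fun x => (sin x^(2*k) * Real.sqrt (1 - sin x^2)) * cos x)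
      (fun x => sin x^(2*k) - sin x^(2*k+2)) (Set.uIcc (-(π/2)) (π/2)) := by
    intro x hx
    rw [Set.uIcc_of_le (by linarith [pi_pos]: -(π/2) ≤ π/2)] at hx
    have hc : 0 ≤ cos x := Real.cos_nonneg_of_mem_Icc hx
    have h1 : 1 - sin x^2 = cos x ^2 := (Real.cos_sq' x).symm
    simp only [h1, Real.sqrt_sq hc]
    have h2 := Real.sin_sq_add_cos_sq x
    linear_combination sin x ^ (2*k) * h2
  rw [hsub, intervalIntegral.integral_congr hcongr, intervalIntegral.integral_sub (f := fun x => sin x ^ (2*k)) (g := fun x => sin x ^ (2*k+2))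
      ((continuous_sin.pow _).intervalIntegrable _ _) ((continuous_sin.pow _).intervalIntegrable _ _)]
  have h2 : 2*k+2 = 2*(k+1) := by ring
  rw [h2, I_even, I_even, Finset.prod_range_succ, prodP]
  have hcb : ((k:ℝ)+1) * (catalan k : ℝ) = (Nat.centralBinom k : ℝ) := by
    exact_mod_cast congrArg (fun j : ℕ => (j:ℝ)) (succ_mul_catalan_eq_centralBinom k)
  unfold aa
  rw [← hcb]
  have hp : (0:ℝ) < 4^k := by positivity
  have hk2 : (2*(k:ℝ)+2) ≠ 0 := by positivity
  field_simp
  ring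




noncomputable def cc : ℕ → ℂ
  | 0 => 1
  | (m+1) => -(aa m : ℂ)/2

lemma cc_norm (k : ℕ) : ‖cc k‖ ≤ 1 := by
  cases k with
  | zero => simp [cc]
  | succ m =>
    simp only [cc]
    rw [norm_div, norm_neg]
    simp only [Complex.norm_real, Complex.norm_ofNat]
    rw [Real.norm_eq_abs, abs_of_nonneg (aa_nonneg m)]
    nlinarith [aa_le_two m]

lemma summable_aux {u : ℂ} (hu : ‖u‖ < 1) {b : ℕ → ℂ} {C : ℝ} (hb : ∀ k, ‖b k‖ ≤ C) :
    Summable (fun k => ‖b k * u^k‖) := by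
  have h0 : 0 ≤ ‖u‖ := norm_nonneg u
  refine Summable.of_nonneg_of_le (fun k => norm_nonneg _) (fun k => ?_)
    ((summable_geometric_of_lt_one h0 hu).mul_left C)
  rw [norm_mul, norm_pow]
  exact mul_le_mul_of_nonneg_right (hb k) (by positivity)

lemma tsum_aa_le {t : ℝ} (h0 : 0 ≤ t) (h1 : t < 1) : ∑' k, aa k * t^k ≤ 2 := by
  refine Real.tsum_le_of_sum_range_le (fun k => mul_nonneg (aa_nonneg k) (by positivity)) ?_
  intro n
  calc ∑ k ∈ range n, aa k * t^k ≤ ∑ k ∈ range n, aa k := by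
        refine Finset.sum_le_sum fun k _ => ?_
        nlinarith [aa_nonneg k, pow_le_one₀ h0 h1.le (n := k)]
  _ ≤ 2 := aa_sum_le n

lemma summable_aa_mul {t : ℝ} (h0 : 0 ≤ t) (h1 : t < 1) : Summable (fun k => aa k * t^k) := by
  refine Summable.of_nonneg_of_le (fun k => mul_nonneg (aa_nonneg k) (by positivity)) (fun k => ?_)
    ((summable_geometric_of_lt_one h0 h1).mul_left 2)
  exact mul_le_mul_of_nonneg_right (aa_le_two k) (by positivity)

noncomputable def DD (n : ℕ) : ℂ := ∑ k ∈ range (n+1), cc k * cc (n-k)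

lemma DD_zero : DD 0 = 1 := by simp [DD, cc]

lemma DD_one : DD 1 = -1 := by
  simp [DD, Finset.sum_range_succ, cc, aa_zero]

lemma DD_ge_two (n : ℕ) : DD (n+2) = 0 := by
  unfold DD
  rw [Finset.sum_range_succ', Finset.sum_range_succ]
  have h1 : ∀ k ∈ range (n+1), cc (k+1) * cc (n+2-(k+1)) = ((aa k * aa (n-k) : ℝ) : ℂ)/4 := by
    intro k hk
    have hk' : k ≤ n := Nat.lt_succ_iff.mp (Finset.mem_range.mp hk)
    have h2 : n+2-(k+1) = (n-k)+1 := by omega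
    rw [h2]
    simp only [cc]
    push_cast
    ring
  rw [Finset.sum_congr rfl h1, ← Finset.sum_div, ← Complex.ofReal_sum, aa_conv]
  have h3 : n+2-(n+1+1) = 0 := by omega
  have h4 : n + 2 - 0 = n+2 := rfl
  rw [h3]
  simp only [cc]
  push_cast
  ring

lemma re_cpow_half_pos {w : ℂ} (hw : 0 < w.re) : 0 < (w ^ ((1:ℂ)/2)).re := by
  have hw0 : w ≠ 0 := fun h => by simp [h] at hw
  rw [Complex.cpow_def_of_ne_zero hw0, Complex.exp_re]
  have him : (Complex.log w * (1/2)).im = w.arg / 2 := by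
    simp [Complex.mul_im, Complex.log_im]
    ring
  rw [him]
  have harg : |w.arg| < π/2 := Complex.abs_arg_lt_pi_div_two_iff.mpr (Or.inl hw)
  have h2 : |w.arg| / 2 < π/2 := by nlinarith [pi_pos]
  have h3 := abs_lt.mp (lt_of_le_of_lt (le_refl |w.arg|) harg)
  refine mul_pos (Real.exp_pos _) (Real.cos_pos_of_mem_Ioo ⟨?_, ?_⟩) <;>
    [nlinarith [h3.1, pi_pos]; nlinarith [h3.2, pi_pos]]




lemma Mval_even (k : ℕ) : (∫ x in (-1:ℝ)..1, x^(2*k) * (2/π * Real.sqrt (1-x^2))) = aa k := by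
  have h : (fun x : ℝ => x^(2*k) * (2/π * Real.sqrt (1-x^2)))
      = fun x : ℝ => (2/π) * (x^(2*k) * Real.sqrt (1-x^2)) := funext fun x => by ring
  rw [h, intervalIntegral.integral_const_mul, moment]
  field_simp

lemma Mval_odd (k : ℕ) : (∫ x in (-1:ℝ)..1, x^(2*k+1) * (2/π * Real.sqrt (1-x^2))) = 0 := by
  set F : ℝ → ℝ := fun x => x^(2*k+1) * (2/π * Real.sqrt (1-x^2)) with hF
  have h1 : (∫ x in (-1:ℝ)..1, F (-x)) = ∫ x in (-(1:ℝ))..(-(-1:ℝ)), F x :=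
    intervalIntegral.integral_comp_neg F
  have h2 : (fun x : ℝ => F (-x)) = fun x => -F x := by
    funext x
    simp only [hF]
    rw [Odd.neg_pow ⟨k, by ring⟩, neg_sq]
    ring
  rw [h2] at h1
  norm_num [intervalIntegral.integral_neg] at h1
  linarith

lemma step_swap (z : ℂ) (hz : 1 < ‖z‖) :
    (∫ x in (-1:ℝ)..1, ((x : ℂ) - z)⁻¹ * (((2 / Real.pi) * Real.sqrt (1 - x ^ 2) : ℝ) : ℂ))
      = ∑' n : ℕ, -(z⁻¹^(n+1)) *
          (((∫ x in (-1:ℝ)..1, x^n * (2/Real.pi * Real.sqrt (1-x^2))) : ℝ) : ℂ) := by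
  have hz0 : z ≠ 0 := by
    intro h; rw [h] at hz; simp at hz; linarith
  have hzn : (1:ℝ) < ‖z‖ := hz
  set r : ℝ := ‖z⁻¹‖ with hr
  have hr1 : r < 1 := by
    rw [hr, norm_inv]
    rw [inv_lt_one_iff₀]
    right; exact hzn
  have hr0 : 0 ≤ r := norm_nonneg _
  set f : ℕ → ℝ → ℂ := fun n x => -(z⁻¹^(n+1)) *
      ((x:ℂ)^n * (((2/Real.pi) * Real.sqrt (1-x^2) : ℝ):ℂ)) with hf
  -- pointwise has sum
  have hpt : ∀ x : ℝ, x ∈ Set.Ioc (-1:ℝ) 1 → HasSum (fun n => f n x)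
      (((x:ℂ) - z)⁻¹ * (((2 / Real.pi) * Real.sqrt (1 - x ^ 2) : ℝ) : ℂ)) := by
    intro x hx
    have hx1 : |x| ≤ 1 := abs_le.mpr ⟨hx.1.le, hx.2⟩
    have hxz : ‖(x:ℂ)/z‖ < 1 := by
      rw [norm_div, Complex.norm_real, Real.norm_eq_abs, div_lt_one (by linarith)]
      linarith
    have hgeo := hasSum_geometric_of_norm_lt_one hxz
    have hmul := hgeo.mul_left ((-z⁻¹) * (((2 / Real.pi) * Real.sqrt (1 - x ^ 2) : ℝ) : ℂ))
    have hfun : (fun n => (-z⁻¹) * (((2 / Real.pi) * Real.sqrt (1 - x ^ 2) : ℝ) : ℂ) * ((x:ℂ)/z)^n)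
        = fun n => f n x := by
      funext n
      simp only [hf, div_eq_mul_inv, mul_pow, pow_succ]
      ring
    have hkey : (-z⁻¹) * (((2 / Real.pi) * Real.sqrt (1 - x ^ 2) : ℝ) : ℂ) * (1 - (x:ℂ)/z)⁻¹
        = ((x:ℂ) - z)⁻¹ * (((2 / Real.pi) * Real.sqrt (1 - x ^ 2) : ℝ) : ℂ) := by
      have h1 : (1 - (x:ℂ)/z) = ((x:ℂ) - z) * (-z⁻¹) := by
        field_simp
        ring
      have hxne : ((x:ℂ)) ≠ z := by
        intro h0
        rw [← h0, Complex.norm_real, Real.norm_eq_abs] at hzn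
        linarith
      rw [h1, mul_inv, inv_neg, inv_inv]
      have hzz : z⁻¹ * z = 1 := inv_mul_cancel₀ hz0
      linear_combination (((x:ℂ)-z)⁻¹ * (((2/Real.pi) * Real.sqrt (1-x^2) : ℝ):ℂ)) * hzz
    rw [hfun, hkey] at hmul
    exact hmul
  -- continuity / measurability
  have hρc : Continuous fun x : ℝ => (((2/Real.pi) * Real.sqrt (1-x^2) : ℝ) : ℂ) :=
    Complex.continuous_ofReal.comp (continuous_const.mul (Real.continuous_sqrt.comp (by continuity)))
  have hmeas : ∀ n, AEStronglyMeasurable (f n) (volume.restrict (Set.Ioc (-1:ℝ) 1)) := fun n =>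
    (continuous_const.mul ((Complex.continuous_ofReal.pow n).mul hρc)).aestronglyMeasurable
  -- uniform bound
  have hbd : ∀ (n : ℕ) (x : ℝ), ‖f n x‖ ≤ (2/π) * r^(n+1) := by
    intro n x
    have hπ : (0:ℝ) < π := pi_pos
    have hnorm : ‖f n x‖ = r^(n+1) * (|x|^n * |2/π * Real.sqrt (1-x^2)|) := by
      simp only [hf, norm_mul, norm_neg, norm_pow, Complex.norm_real, Real.norm_eq_abs]
      rw [← hr, abs_mul]
    rcases le_or_gt (1 - x^2) 0 with h|h
    · rw [hnorm, Real.sqrt_eq_zero'.mpr h]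
      simp only [mul_zero, abs_zero]
      positivity
    · have hx1 : |x| ≤ 1 := abs_le.mpr ⟨by nlinarith, by nlinarith⟩
      have hs1 : Real.sqrt (1-x^2) ≤ 1 := by
        calc Real.sqrt (1-x^2) ≤ Real.sqrt 1 := Real.sqrt_le_sqrt (by nlinarith)
        _ = 1 := Real.sqrt_one
      have hsnn : (0:ℝ) ≤ Real.sqrt (1-x^2) := Real.sqrt_nonneg _
      rw [hnorm, abs_of_nonneg (mul_nonneg (div_nonneg (by norm_num) hπ.le) hsnn)]
      have h2 : |x|^n ≤ 1 := pow_le_one₀ (abs_nonneg x) hx1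
      calc r^(n+1) * (|x|^n * (2/π * Real.sqrt (1-x^2)))
          ≤ r^(n+1) * (1 * (2/π * 1)) := by
            gcongr
      _ = (2/π) * r^(n+1) := by ring
  -- lintegral bounds
  have hlint : ∀ n, (∫⁻ x, ‖f n x‖₊ ∂(volume.restrict (Set.Ioc (-1:ℝ) 1)))
      ≤ ENNReal.ofReal ((2/π) * r^(n+1)) * 2 := by
    intro n
    calc (∫⁻ x, ‖f n x‖₊ ∂(volume.restrict (Set.Ioc (-1:ℝ) 1)))
        ≤ ∫⁻ _, ENNReal.ofReal ((2/π)*r^(n+1)) ∂(volume.restrict (Set.Ioc (-1:ℝ) 1)) := by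
          refine lintegral_mono fun x => ?_
          rw [← ENNReal.ofReal_coe_nnreal, coe_nnnorm]
          exact ENNReal.ofReal_le_ofReal (hbd n x)
    _ = ENNReal.ofReal ((2/π)*r^(n+1)) * 2 := by
          rw [lintegral_const, Measure.restrict_apply_univ, Real.volume_Ioc]
          norm_num
  have hsummable : Summable (fun n : ℕ => (2/π) * r^(n+1)) := by
    have h2 : (fun n : ℕ => (2/π) * r^(n+1)) = fun n => ((2/π)*r) * r^n :=
      funext fun n => by rw [pow_succ]; ring
    rw [h2]
    exact (summable_geometric_of_lt_one hr0 hr1).mul_left _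
  have hne : ∑' n, ∫⁻ x, ‖f n x‖₊ ∂(volume.restrict (Set.Ioc (-1:ℝ) 1)) ≠ ⊤ := by
    refine ne_top_of_le_ne_top ?_ (ENNReal.tsum_le_tsum hlint)
    rw [ENNReal.tsum_mul_right]
    refine ENNReal.mul_ne_top ?_ (by norm_num)
    rw [← ENNReal.ofReal_tsum_of_nonneg (fun n => by positivity) hsummable]
    exact ENNReal.ofReal_ne_top
  rw [intervalIntegral.integral_of_le (by norm_num : (-1:ℝ) ≤ 1)]
  have hcong : (∫ x in Set.Ioc (-1:ℝ) 1,
        ((x : ℂ) - z)⁻¹ * (((2 / Real.pi) * Real.sqrt (1 - x ^ 2) : ℝ) : ℂ))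
      = ∫ x in Set.Ioc (-1:ℝ) 1, ∑' n, f n x := by
    refine setIntegral_congr_fun measurableSet_Ioc fun x hx => ?_
    exact ((hpt x hx).tsum_eq).symm
  rw [hcong, MeasureTheory.integral_tsum hmeas hne]
  refine tsum_congr fun n => ?_
  simp only [hf]
  rw [MeasureTheory.integral_const_mul]
  congr 1
  rw [← intervalIntegral.integral_ofReal,
    ← intervalIntegral.integral_of_le (by norm_num : (-1:ℝ) ≤ 1)]
  refine intervalIntegral.integral_congr fun x _ => ?_
  push_cast
  ring




theorem borel_transform_semicircle (z : ℂ) (hz : 1 < ‖z‖) :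
    (∫ x in (-1:ℝ)..1, ((x : ℂ) - z)⁻¹ * (((2 / Real.pi) * Real.sqrt (1 - x ^ 2) : ℝ) : ℂ)) =
      -2 * z * (1 - (1 - 1 / z ^ 2) ^ ((1 : ℂ) / 2)) := by
  have hz0 : z ≠ 0 := by
    intro h; rw [h] at hz; simp at hz; linarith
  have hzn : (1:ℝ) < ‖z‖ := hz
  set u : ℂ := 1 / z^2 with hu
  have hun : ‖u‖ < 1 := by
    rw [hu, norm_div, norm_one, norm_pow, div_lt_one (by positivity)]
    nlinarith
  have hu0 : (0:ℝ) ≤ ‖u‖ := norm_nonneg u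
  have hpow : ∀ k : ℕ, z⁻¹^(2*k+1) = z⁻¹ * u^k := by
    intro k
    rw [hu, one_div, ← inv_pow, ← pow_mul, ← pow_succ']
  rw [step_swap z hz]
  set g : ℕ → ℂ := fun n => -(z⁻¹^(n+1)) *
      (((∫ x in (-1:ℝ)..1, x^n * (2/Real.pi * Real.sqrt (1-x^2))) : ℝ) : ℂ) with hg
  -- even and odd parts
  have hgeven : (fun k => g (2*k)) = fun k => (-(z⁻¹) * (aa k : ℂ)) * u^k := by
    funext k
    simp only [hg]
    rw [Mval_even k, hpow k]
    ring
  have hgodd : (fun k => g (2*k+1)) = fun _ => (0:ℂ) := by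
    funext k
    simp only [hg]
    rw [Mval_odd k]
    simp
  have hbE : ∀ k : ℕ, ‖-(z⁻¹) * ((aa k : ℝ) : ℂ)‖ ≤ 2 := by
    intro k
    rw [norm_mul, norm_neg, norm_inv, Complex.norm_real, Real.norm_eq_abs,
      abs_of_nonneg (aa_nonneg k)]
    have h1 : ‖z‖⁻¹ ≤ 1 := by
      rw [inv_le_one_iff₀]; right; linarith
    nlinarith [aa_le_two k, aa_nonneg k, norm_nonneg z, inv_nonneg.mpr (norm_nonneg z)]
  have sE : Summable (fun k => (-(z⁻¹) * (aa k : ℂ)) * u^k) :=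
    (summable_aux hun hbE).of_norm
  set E : ℂ := ∑' k, (-(z⁻¹) * (aa k : ℂ)) * u^k with hE
  have he : HasSum (fun k => g (2*k)) E := by rw [hgeven]; exact sE.hasSum
  have ho : HasSum (fun k => g (2*k+1)) 0 := by rw [hgodd]; exact hasSum_zero
  have hgsum : HasSum g (E + 0) := he.even_add_odd ho
  rw [hgsum.tsum_eq, add_zero]
  -- the series T
  have sN : Summable (fun k => ‖cc k * u^k‖) := summable_aux hun cc_norm
  have sT : Summable (fun k => cc k * u^k) := sN.of_norm
  set T : ℂ := ∑' k, cc k * u^k with hT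
  -- Cauchy product
  have hTT : T * T = ∑' n, ∑ kl ∈ Finset.HasAntidiagonal.antidiagonal n, (cc kl.1 * u^kl.1) * (cc kl.2 * u^kl.2) :=
    tsum_mul_tsum_eq_tsum_sum_antidiagonal_of_summable_norm sN sN
  have hDD : ∀ n, (∑ kl ∈ Finset.HasAntidiagonal.antidiagonal n, (cc kl.1 * u^kl.1) * (cc kl.2 * u^kl.2))
      = DD n * u^n := by
    intro n
    rw [Finset.Nat.sum_antidiagonal_eq_sum_range_succ_mk]
    unfold DD
    rw [Finset.sum_mul]
    refine Finset.sum_congr rfl fun k hk => ?_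
    have hk' : k ≤ n := Nat.lt_succ_iff.mp (Finset.mem_range.mp hk)
    rw [show u^n = u^k * u^(n-k) from by rw [← pow_add]; congr 1; omega]
    ring
  have hT2 : T * T = 1 - u := by
    rw [hTT, tsum_congr hDD, tsum_eq_sum (s := Finset.range 2) ?_]
    · rw [Finset.sum_range_succ, Finset.sum_range_one, DD_zero, DD_one]
      ring
    · intro n hn
      have h2 : 2 ≤ n := by by_contra hlt; exact hn (Finset.mem_range.mpr (by omega))
      obtain ⟨m, rfl⟩ : ∃ m, n = m + 2 := ⟨n - 2, by omega⟩
      rw [DD_ge_two]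
      ring
  -- tail representation
  have hT1 : T = 1 + ∑' k, cc (k+1) * u^(k+1) := by
    rw [hT, Summable.tsum_eq_zero_add sT]
    simp [cc]
  -- E = 2z(T-1)
  have hE2 : E = 2*z*(T - 1) := by
    have hzz : z * (z^2)⁻¹ = z⁻¹ := by
      rw [pow_two, mul_inv, ← mul_assoc, mul_inv_cancel₀ hz0, one_mul]
    rw [hT1, hE]
    rw [show (2*z*(1 + (∑' k, cc (k+1) * u^(k+1)) - 1) : ℂ)
        = 2*z*(∑' k, cc (k+1) * u^(k+1)) from by ring]
    rw [← tsum_mul_left]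
    refine tsum_congr fun k => ?_
    simp only [cc]
    rw [hu, one_div]
    linear_combination ((aa k : ℂ)) * ((z^2)⁻¹)^k * hzz
  -- branch
  set w : ℂ := 1 - u with hw
  have hure : |u.re| ≤ ‖u‖ := Complex.abs_re_le_norm u
  have hwre : 0 < w.re := by
    rw [hw]
    simp only [Complex.sub_re, Complex.one_re]
    have := abs_le.mp hure
    linarith
  have hw0 : w ≠ 0 := fun h => by simp [h] at hwre
  have hgg : w^((1:ℂ)/2) * w^((1:ℂ)/2) = w := by
    rw [← Complex.cpow_add _ _ hw0]
    norm_num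
  have hT2' : T * T = w := by rw [hT2, hw]
  have hTor : T = w^((1:ℂ)/2) ∨ T = -(w^((1:ℂ)/2)) := by
    have h0 : (T - w^((1:ℂ)/2)) * (T + w^((1:ℂ)/2)) = 0 := by
      linear_combination hT2' - hgg
    rcases mul_eq_zero.mp h0 with h|h
    · exact Or.inl (sub_eq_zero.mp h)
    · exact Or.inr (eq_neg_of_add_eq_zero_left h)
  -- Re T > 0
  have sN' : Summable (fun k => ‖cc (k+1) * u^(k+1)‖) := by
    have hb : ∀ k : ℕ, ‖cc (k+1) * u‖ ≤ 1 := by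
      intro k
      rw [norm_mul]
      nlinarith [cc_norm (k+1), norm_nonneg (cc (k+1)), hun, norm_nonneg u]
    exact (summable_aux hun hb).congr fun k => by rw [mul_assoc, ← pow_succ']
  have hnt : ‖∑' k, cc (k+1) * u^(k+1)‖ ≤ ‖u‖ := by
    calc ‖∑' k, cc (k+1) * u^(k+1)‖ ≤ ∑' k, ‖cc (k+1) * u^(k+1)‖ := norm_tsum_le_tsum_norm sN'
    _ = ∑' k, (‖u‖/2) * (aa k * ‖u‖^k) := by
        refine tsum_congr fun k => ?_
        rw [norm_mul, norm_pow]
        simp only [cc]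
        rw [norm_div, norm_neg, Complex.norm_real, Real.norm_eq_abs,
          abs_of_nonneg (aa_nonneg k), Complex.norm_ofNat, pow_succ']
        ring
    _ = (‖u‖/2) * ∑' k, aa k * ‖u‖^k := tsum_mul_left
    _ ≤ (‖u‖/2) * 2 := by
        have h2 := tsum_aa_le hu0 hun
        nlinarith [hu0]
    _ = ‖u‖ := by ring
  have hTre : 0 < T.re := by
    rw [hT1]
    simp only [Complex.add_re, Complex.one_re]
    have h3 := abs_le.mp ((Complex.abs_re_le_norm _).trans hnt)
    linarith
  have hgre : 0 < (w^((1:ℂ)/2)).re := re_cpow_half_pos hwre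
  have hTg : T = w^((1:ℂ)/2) := by
    rcases hTor with h|h
    · exact h
    · exfalso
      rw [h] at hTre
      simp only [Complex.neg_re] at hTre
      linarith
  rw [hE2, hTg, hw]
  ring
end

section
/- In the N-ary tree (N ≥ 1), let η = η₁…η_n be a word of length n ≥ 1, and define v : V → ℝ by v(ω) = n - p(ω, η), where p(ω, η) is the length of the longest common prefix of ω and η. Then v solves Δv = δ_∅ - δ_η, where Δ is the graph Laplacian with unit conductances. -/
/-- Length of the longest common prefix of two words. -/
def lcp {α : Type*} [DecidableEq α] : List α → List α → ℕ
  | a :: as, b :: bs => if a = b then lcp as bs + 1 else 0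
  | _, _ => 0

/-- The graph Laplacian (unit conductances) of the `N`-ary tree, acting on functions on
the vertex set `List (Fin N)` (finite words, words grow by appending letters at the end);
the root `[]` has the `N` children `[i]` as neighbors, and any other word `ω` has its
parent `ω.dropLast` and its `N` children `ω ++ [i]` as neighbors. -/
noncomputable def treeLap (N : ℕ) (v : List (Fin N) → ℝ) (ω : List (Fin N)) : ℝ :=
  if ω = [] then (N : ℝ) * v [] - ∑ i : Fin N, v [i]
  else ((N : ℝ) + 1) * v ω - v ω.dropLast - ∑ i : Fin N, v (ω ++ [i])

theorem lcp_nil_left {α : Type*} [DecidableEq α] (bs : List α) : lcp [] bs = 0 := by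
  cases bs <;> rfl

theorem lcp_nil_right {α : Type*} [DecidableEq α] (as : List α) : lcp as [] = 0 := by
  cases as <;> rfl

theorem lcp_cons {α : Type*} [DecidableEq α] (a b : α) (as bs : List α) :
    lcp (a :: as) (b :: bs) = if a = b then lcp as bs + 1 else 0 := rfl

theorem lcp_le_left {α : Type*} [DecidableEq α] : ∀ (as bs : List α), lcp as bs ≤ as.length
  | [], bs => by simp [lcp_nil_left]
  | a :: as, [] => by simp [lcp_nil_right]
  | a :: as, b :: bs => by
    rw [lcp_cons]
    split
    · simpa using lcp_le_left as bs
    · simp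

theorem lcp_append_left {α : Type*} [DecidableEq α] : ∀ (as xs ys : List α),
    lcp (as ++ xs) (as ++ ys) = as.length + lcp xs ys
  | [], xs, ys => by simp
  | a :: as, xs, ys => by
    rw [List.cons_append, List.cons_append, lcp_cons, if_pos rfl,
      lcp_append_left as xs ys, List.length_cons]
    ring

theorem lcp_self_append {α : Type*} [DecidableEq α] (as ys : List α) :
    lcp as (as ++ ys) = as.length := by
  have := lcp_append_left as [] ys
  simpa [lcp_nil_left] using this

theorem lcp_append_self {α : Type*} [DecidableEq α] (as xs : List α) :
    lcp (as ++ xs) as = as.length := by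
  have := lcp_append_left as xs []
  simpa [lcp_nil_right] using this

theorem lcp_append_of_lt {α : Type*} [DecidableEq α] : ∀ (as bs xs : List α),
    lcp as bs < as.length → lcp (as ++ xs) bs = lcp as bs
  | [], bs, xs, h => by simp [lcp_nil_left] at h
  | a :: as, [], xs, h => by simp [lcp_nil_right]
  | a :: as, b :: bs, xs, h => by
    rw [lcp_cons] at h ⊢
    by_cases hab : a = b
    · rw [if_pos hab] at h ⊢
      rw [List.cons_append, lcp_cons, if_pos hab, lcp_append_of_lt as bs xs (by
        simpa using Nat.lt_of_succ_lt_succ h)]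
    · simp only [if_neg hab] at h ⊢
      rw [List.cons_append, lcp_cons, if_neg hab]

theorem lcp_dropLast_of_lt {α : Type*} [DecidableEq α] : ∀ (as bs : List α),
    lcp as bs < as.length → lcp as.dropLast bs = lcp as bs
  | [], bs, h => by simp [lcp_nil_left] at h
  | [a], bs, h => by
    have h0 : lcp [a] bs = 0 := by
      simp only [List.length_singleton] at h
      omega
    simp [h0, lcp_nil_left]
  | a :: a' :: as, [], h => by simp [lcp_nil_right]
  | a :: a' :: as, b :: bs, h => by
    rw [lcp_cons] at h ⊢
    by_cases hab : a = b
    · rw [if_pos hab] at h ⊢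
      have := lcp_dropLast_of_lt (a' :: as) bs (by simpa using Nat.lt_of_succ_lt_succ h)
      rw [show (a :: a' :: as).dropLast = a :: (a' :: as).dropLast from rfl, lcp_cons,
        if_pos hab, this]
    · simp only [if_neg hab] at h ⊢
      rw [show (a :: a' :: as).dropLast = a :: (a' :: as).dropLast from rfl, lcp_cons,
        if_neg hab]

theorem prefix_of_lcp_eq {α : Type*} [DecidableEq α] : ∀ (as bs : List α),
    lcp as bs = as.length → as <+: bs
  | [], bs, _ => List.nil_prefix
  | a :: as, [], h => by simp [lcp_nil_right] at h
  | a :: as, b :: bs, h => by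
    rw [lcp_cons] at h
    by_cases hab : a = b
    · rw [if_pos hab] at h
      subst hab
      exact (List.prefix_cons_inj a).mpr (prefix_of_lcp_eq as bs (by simpa using h))
    · simp [hab] at h

theorem tree_potential (N : ℕ) (hN : 1 ≤ N) (η : List (Fin N)) (hη : η ≠ []) :
    ∀ ω : List (Fin N),
      treeLap N (fun ω => (η.length : ℝ) - (lcp ω η : ℝ)) ω =
        (if ω = [] then 1 else 0) - (if ω = η then 1 else 0) := by
  intro ω
  by_cases hω : ω = []
  · subst hω
    obtain ⟨c, rest, rfl⟩ : ∃ c rest, η = c :: rest := by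
      cases η with
      | nil => exact absurd rfl hη
      | cons c rest => exact ⟨c, rest, rfl⟩
    rw [treeLap, if_pos rfl, if_pos rfl, if_neg (Ne.symm hη)]
    have hone : ∀ i : Fin N, lcp [i] (c :: rest) = if i = c then 1 else 0 := by
      intro i
      simp [lcp_cons, lcp_nil_left]
    simp only [lcp_nil_left]
    rw [Finset.sum_sub_distrib]
    have hsum : ∑ i : Fin N, ((lcp [i] (c :: rest) : ℕ) : ℝ) = 1 := by
      simp only [hone, apply_ite (Nat.cast : ℕ → ℝ), Nat.cast_one, Nat.cast_zero]
      rw [Finset.sum_ite_eq' Finset.univ c (fun _ => (1 : ℝ))]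
      simp
    rw [hsum, Finset.sum_const, Finset.card_univ, Fintype.card_fin, nsmul_eq_mul]
    push_cast
    ring
  · rw [treeLap, if_neg hω, if_neg hω]
    rcases lt_or_eq_of_le (lcp_le_left ω η) with h | h
    · -- ω is not a prefix of η
      have hne : ω ≠ η := by
        rintro rfl
        have : lcp ω ω = ω.length := by
          have := lcp_self_append ω []
          simpa using this
        omega
      rw [if_neg hne]
      have h1 : ∀ i : Fin N, lcp (ω ++ [i]) η = lcp ω η := fun i =>
        lcp_append_of_lt ω η [i] h
      have h2 : lcp ω.dropLast η = lcp ω η := lcp_dropLast_of_lt ω η h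
      simp only [h1, h2, Finset.sum_const, Finset.card_univ, Fintype.card_fin, nsmul_eq_mul]
      ring
    · -- ω is a prefix of η
      obtain ⟨t, ht⟩ := prefix_of_lcp_eq ω η h
      subst ht
      have hωlen : 1 ≤ ω.length := by
        cases ω
        · exact absurd rfl hω
        · simp
      have hdec : ω ++ t = ω.dropLast ++ ([ω.getLast hω] ++ t) := by
        rw [← List.append_assoc, List.dropLast_append_getLast hω]
      have hdl : ((lcp ω.dropLast (ω ++ t) : ℕ) : ℝ) = (ω.length : ℝ) - 1 := by
        rw [hdec, lcp_self_append, List.length_dropLast]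
        push_cast [hωlen]
        ring
      have hlen : (lcp ω (ω ++ t) : ℝ) = (ω.length : ℝ) := by rw [h]
      cases t with
      | nil =>
        rw [if_pos (by simp)]
        have hap : ∀ i : Fin N, lcp (ω ++ [i]) (ω ++ ([] : List (Fin N))) = ω.length := by
          intro i
          rw [List.append_nil, lcp_append_self]
        simp only [hap, hlen, hdl, Finset.sum_const, Finset.card_univ, Fintype.card_fin,
          nsmul_eq_mul]
        simp only [List.append_nil]
        ring
      | cons d ds =>
        have hne : ω ≠ ω ++ d :: ds := by
          intro hh
          have := congrArg List.length hh
          simp at this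
        rw [if_neg hne]
        have hap : ∀ i : Fin N, lcp (ω ++ [i]) (ω ++ d :: ds)
            = ω.length + if i = d then 1 else 0 := by
          intro i
          rw [lcp_append_left]
          simp [lcp_cons, lcp_nil_left]
        have hsum : ∑ i : Fin N, (((ω ++ d :: ds).length : ℝ) - (lcp (ω ++ [i]) (ω ++ d :: ds) : ℝ))
            = N * (((ω ++ d :: ds).length : ℝ) - (ω.length : ℝ)) - 1 := by
          rw [Finset.sum_sub_distrib]
          have hs2 : ∑ i : Fin N, ((lcp (ω ++ [i]) (ω ++ d :: ds) : ℕ) : ℝ)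
              = N * ω.length + 1 := by
            simp only [hap]
            push_cast [apply_ite (Nat.cast : ℕ → ℝ)]
            rw [Finset.sum_add_distrib, Finset.sum_const,
              Finset.sum_ite_eq' Finset.univ d (fun _ => (1 : ℝ))]
            simp only [Finset.mem_univ, if_pos, Finset.card_univ, Fintype.card_fin,
              nsmul_eq_mul, mul_one]
          rw [hs2, Finset.sum_const, Finset.card_univ, Fintype.card_fin, nsmul_eq_mul]
          ring
        rw [hsum, hlen, hdl]
        ring
end

section
/- Consider the operator Δ on sequences u = (u₀, u₁, u₂, …) given by (Δu)₀ = u₀ - u₁ and (Δu)_n = 2u_n - u_{n-1} - u_{n+1} for n ≥ 1 (the Laplacian of the half-line graph). Let λ = (3+√5)/2 or λ = (3-√5)/2. Then the 10-periodic sequence v with period (1, 1-λ, 0, λ-1, -1, -1, λ-1, 0, 1-λ, 1) satisfies Δv = λv. -/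
open Fin.NatCast

theorem golden_ratio_eigenvector (l : ℝ)
    (hl : l = (3 + Real.sqrt 5) / 2 ∨ l = (3 - Real.sqrt 5) / 2) :
    ∀ v : ℕ → ℝ,
      (∀ k : ℕ,
          v k = ![(1 : ℝ), 1 - l, 0, l - 1, -1, -1, l - 1, 0, 1 - l, 1] (k : Fin 10)) →
        v 0 - v 1 = l * v 0 ∧ ∀ n : ℕ, 1 ≤ n → 2 * v n - v (n - 1) - v (n + 1) = l * v n := by
  have h5 : Real.sqrt 5 ^ 2 = 5 := Real.sq_sqrt (by norm_num)
  have hl2 : l ^ 2 = 3 * l - 1 := by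
    rcases hl with h | h <;> rw [h] <;> nlinarith [h5]
  intro v hv
  have key : ∀ k : ℕ, v k =
      ![(1 : ℝ), 1 - l, 0, l - 1, -1, -1, l - 1, 0, 1 - l, 1]
        ⟨k % 10, Nat.mod_lt _ (by norm_num)⟩ := by
    intro k
    rw [hv k]
    congr 1
  constructor
  · rw [key 0, key 1]
    norm_num
  · intro n hn
    obtain ⟨m, rfl⟩ : ∃ m, n = m + 1 := ⟨n - 1, by omega⟩
    have h1 : m + 1 - 1 = m := rfl
    rw [h1, key m, key (m + 1), key (m + 1 + 1)]
    obtain ⟨r, hr, hmr⟩ : ∃ r, r < 10 ∧ m % 10 = r := ⟨_, by omega, rfl⟩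
    interval_cases r <;>
      simp only [show (m + 1) % 10 = (m % 10 + 1) % 10 from by omega,
        show (m + 1 + 1) % 10 = (m % 10 + 2) % 10 from by omega, hmr] <;>
      norm_num [Matrix.cons_val_zero, Matrix.cons_val_succ, Fin.mk_one] <;>
      nlinarith [hl2]
end
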